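/- Let G be a group with elements α, β, s_1, s_2 such that [α,β] = s_1, [s_1,β] = s_2, [s_2,β] = s_2^{-3}s_1^{-3}, [s_1,α] = [s_1,s_2] = [s_2,α] = 1, and β^3 = 1. Then (αβ)^3 = s_2 s_1^3 α^3. -/
import Mathlib


/-- In any group `G`, if `[α, β] = s₁`, `[s₁, β] = s₂`,
`[s₂, β] = s₂⁻³ s₁⁻³`, `α, s₁, s₂` pairwise commute and `β³ = 1`
(where `[a, b] = a⁻¹ b⁻¹ a b`), then `(αβ)³ = s₂ s₁³ α³`. -/
theorem stmt6 {G : Type*} [Group G] (α β s₁ s₂ : G)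
    (hαβ : α⁻¹ * β⁻¹ * α * β = s₁)
    (h1β : s₁⁻¹ * β⁻¹ * s₁ * β = s₂)
    (h2β : s₂⁻¹ * β⁻¹ * s₂ * β = s₂ ^ (-3 : ℤ) * s₁ ^ (-3 : ℤ))
    (h1α : s₁⁻¹ * α⁻¹ * s₁ * α = 1)
    (h12 : s₁⁻¹ * s₂⁻¹ * s₁ * s₂ = 1)
    (h2α : s₂⁻¹ * α⁻¹ * s₂ * α = 1)
    (hβ : β ^ 3 = 1) :
    (α * β) ^ 3 = s₂ * s₁ ^ 3 * α ^ 3 := by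
  have hβ' : β * β * β = 1 := by rw [← hβ, pow_succ, pow_succ, pow_one]
  have e1 : β⁻¹ * α * β = α * s₁ := by rw [← hαβ]; group
  have e2 : β⁻¹ * s₁ * β = s₁ * s₂ := by rw [← h1β]; group
  have c1 : α * s₁ = s₁ * α := by
    rw [← mul_one (α * s₁), ← h1α]; group
  have c2 : s₁ * s₂ = s₂ * s₁ := by
    rw [← mul_one (s₂ * s₁), ← h12]; group
  have c3 : α * s₂ = s₂ * α := by
    rw [← mul_one (α * s₂), ← h2α]; group
  have f2' : β * β * α * β⁻¹ * β⁻¹ = α * s₁ := by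
    have h : β * β * α * β⁻¹ * β⁻¹ = β⁻¹ * (β * β * β) * α * (β * β * β)⁻¹ * β := by
      group
    rw [h, hβ']; simp only [one_mul, mul_one, inv_one]; exact e1
  have f1 : β * α * β⁻¹ = α * s₁ * (s₁ * s₂) := by
    have h : β * α * β⁻¹ = β⁻¹ * β⁻¹ * (β * β * β) * α * (β * β * β)⁻¹ * β * β := by
      group
    rw [h, hβ']; simp only [one_mul, mul_one, inv_one]
    have h2 : β⁻¹ * β⁻¹ * α * β * β = β⁻¹ * (β⁻¹ * α * β) * β := by group
    rw [h2, e1]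
    have h3 : β⁻¹ * (α * s₁) * β = (β⁻¹ * α * β) * (β⁻¹ * s₁ * β) := by group
    rw [h3, e1, e2]
  have key : (α * β) ^ 3 = α * (β * α * β⁻¹) * (β * β * α * β⁻¹ * β⁻¹) * (β * β * β) := by
    rw [pow_succ, pow_succ, pow_one]; group
  rw [key, f1, f2', hβ', mul_one]
  show α * (α * s₁ * (s₁ * s₂)) * (α * s₁) = s₂ * s₁ ^ 3 * α ^ 3
  have c1' : ∀ x : G, α * (s₁ * x) = s₁ * (α * x) := fun x => by
    rw [← mul_assoc, c1, mul_assoc]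
  have c2' : ∀ x : G, s₁ * (s₂ * x) = s₂ * (s₁ * x) := fun x => by
    rw [← mul_assoc, c2, mul_assoc]
  have c3' : ∀ x : G, α * (s₂ * x) = s₂ * (α * x) := fun x => by
    rw [← mul_assoc, c3, mul_assoc]
  simp only [pow_succ, pow_zero, one_mul, mul_assoc, c1, c2, c3, c1', c2', c3']
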